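/- Let p be an odd prime and G = ℤ/pℤ ⊕ ℤ/pℤ with generators τ₁, τ₂; set tᵢ = τᵢ − 1, T₃ = ∑_{j=0}^{p-1}(τ₁τ₂)^j, T_{p+1} = ∑_{j=0}^{p-1}(τ₁τ₂^{p-1})^j, and T_G = ∑_{g∈G} g. Then there exist κ₁, κ₂ ∈ ℤ[G] with t₁κ₁ + t₂κ₂ + ((p−1)/2)·T₃ + ((p−1)/2)·T_{p+1} = T_G − p. -/

import Mathlib

open MonoidAlgebra

abbrev GrpP (p : ℕ) := Multiplicative (ZMod p × ZMod p)
abbrev GA (p : ℕ) := MonoidAlgebra ℤ (GrpP p)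

/-- The group element `τ₁^a τ₂^b` viewed in the group ring `ℤ[G]`. -/
noncomputable def τ (p : ℕ) (v : ZMod p × ZMod p) : GA p :=
  MonoidAlgebra.of ℤ (GrpP p) (Multiplicative.ofAdd v)

/-- The "trace" element `1 + σ + ⋯ + σ^{p-1}` for `σ = τ₁^a τ₂^b`. -/
noncomputable def tr (p : ℕ) (v : ZMod p × ZMod p) : GA p :=
  ∑ k ∈ Finset.range p, τ p v ^ k

/-- The sum of all group elements `T_G = ∑_{g ∈ G} g`. -/
noncomputable def TG (p : ℕ) [NeZero p] : GA p :=
  ∑ g : GrpP p, MonoidAlgebra.of ℤ (GrpP p) g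

lemma pow_sub_one_mem {R : Type*} [CommRing R] {x : R} {I : Ideal R}
    (h : x - 1 ∈ I) (n : ℕ) : x ^ n - 1 ∈ I := by
  have := I.mul_mem_left (∑ i ∈ Finset.range n, x ^ i) h
  rwa [geom_sum_mul] at this

lemma tau_pow (p : ℕ) (v : ZMod p × ZMod p) (n : ℕ) :
    τ p v ^ n = τ p (n • v) := by
  simp [τ, ← map_pow, ← ofAdd_nsmul]

lemma tau_mem (p : ℕ) [NeZero p] (v : ZMod p × ZMod p) :
    τ p v - 1 ∈ Ideal.span {τ p (1,0) - 1, τ p (0,1) - 1} := by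
  obtain ⟨a, b⟩ := v
  have key : τ p (a, b) = τ p (1,0) ^ a.val * τ p (0,1) ^ b.val := by
    rw [tau_pow, tau_pow]
    simp [τ, ← map_mul, ← ofAdd_add, Prod.smul_mk, ZMod.natCast_val, ZMod.cast_id]
  have h1 : τ p (1,0) - 1 ∈ Ideal.span {τ p (1,0) - 1, τ p (0,1) - 1} :=
    Ideal.subset_span (by simp)
  have h2 : τ p (0,1) - 1 ∈ Ideal.span {τ p (1,0) - 1, τ p (0,1) - 1} :=
    Ideal.subset_span (by simp)
  rw [key]
  have : τ p (1,0) ^ a.val * τ p (0,1) ^ b.val - 1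
      = (τ p (1,0) ^ a.val - 1) * τ p (0,1) ^ b.val + (τ p (0,1) ^ b.val - 1) := by ring
  rw [this]
  exact Ideal.add_mem _ (Ideal.mul_mem_right _ _ (pow_sub_one_mem h1 _))
    (pow_sub_one_mem h2 _)

theorem stmt5 (p : ℕ) [NeZero p] (hp : p.Prime) (hodd : Odd p) :
    ∃ κ₁ κ₂ : GA p,
      (τ p (1, 0) - 1) * κ₁ + (τ p (0, 1) - 1) * κ₂
        + (((p - 1) / 2 : ℕ) : GA p) * tr p (1, 1)
        + (((p - 1) / 2 : ℕ) : GA p) * tr p (1, -1)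
      = TG p - (p : GA p) := by
  set I := Ideal.span {τ p (1,0) - 1, τ p (0,1) - 1} with hI
  set c : GA p := (((p - 1) / 2 : ℕ) : GA p) with hc
  have hcnat : 2 * ((p - 1) / 2) = p - 1 := by
    obtain ⟨k, hk⟩ := hodd; omega
  have h2c : 2 * c = (p : GA p) - 1 := by
    have h1 : 1 ≤ p := hp.one_lt.le
    rw [hc, ← Nat.cast_ofNat, ← Nat.cast_mul, hcnat, Nat.cast_sub h1, Nat.cast_one]
  have hD : TG p - (p : GA p) - c * tr p (1,1) - c * tr p (1,-1) ∈ I := by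
    have key : TG p - (p : GA p) - c * tr p (1,1) - c * tr p (1,-1)
        = (∑ g : GrpP p, (MonoidAlgebra.of ℤ (GrpP p) g - 1))
          - c * (∑ k ∈ Finset.range p, (τ p (1,1) ^ k - 1))
          - c * (∑ k ∈ Finset.range p, (τ p (1,-1) ^ k - 1)) := by
      simp only [Finset.sum_sub_distrib, Finset.sum_const, Finset.card_univ,
        Finset.card_range]
      have hcard : Fintype.card (GrpP p) = p * p := by
        simp [GrpP, ZMod.card]
      rw [hcard]
      simp only [nsmul_eq_mul, mul_one, Nat.cast_mul, TG, tr]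
      linear_combination (-(p : GA p)) * h2c
    rw [key]
    refine Ideal.sub_mem _ (Ideal.sub_mem _ ?_ ?_) ?_
    · refine Ideal.sum_mem _ fun g _ => ?_
      have := tau_mem p (Multiplicative.toAdd g)
      simpa [τ, hI] using this
    · exact Ideal.mul_mem_left _ _ (Ideal.sum_mem _ fun k _ =>
        pow_sub_one_mem (tau_mem p (1,1)) k)
    · exact Ideal.mul_mem_left _ _ (Ideal.sum_mem _ fun k _ =>
        pow_sub_one_mem (tau_mem p (1,-1)) k)
  rw [hI, Ideal.mem_span_pair] at hD
  obtain ⟨a, b, hab⟩ := hD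
  exact ⟨a, b, by linear_combination hab⟩
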